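/- Over 𝔽 = ℤ/2ℤ, consider the two-step complex for Reidemeister move R2: objects X = A^{⊗s} ⊕ (A^{⊗(s+1)} ⊕ A^{⊗r}) ⊕ A^{⊗s} in homological degrees 0, 1, 2 with differentials d⁰ = (d_{A⁺}, d_{=∥})ᵀ and d¹ = (d_{B⁻}, d_{∥=}). Assume the relations d_{B⁻} ∘ d_{A⁺} = d_{∥=} ∘ d_{=∥}, cap ∘ d_{A⁺} = id, d_{B⁻} ∘ cup = id, cap ∘ cup = 0, and the 4-tube relation d_{A⁺} ∘ cap + cup ∘ d_{∥=} ∘ d_{=∥} ∘ cap + cup ∘ d_{B⁻} = id. Then F¹ = (cup ∘ d_{∥=}, id)ᵀ: A^{⊗r} → A^{⊗(s+1)} ⊕ A^{⊗r} and G¹ = (d_{=∥} ∘ cap, id) define chain maps between this complex and the one-term complex A^{⊗r} (in degree 1), satisfying d¹ ∘ F¹ = 0, G¹ ∘ d⁰ = 0, G¹ ∘ F¹ = id, and with H¹ = (cap, 0), H² = (cup, 0)ᵀ one has H¹ ∘ d⁰ = id, d¹ ∘ H² = id, d⁰ ∘ H¹ + F¹ ∘ G¹ + H² ∘ d¹ =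 id, and H¹ ∘ F¹ = 0 (so G is a strong deformation retraction). -/

import Mathlib

lemma zmod2_self_add {M : Type*} [AddCommGroup M] [Module (ZMod 2) M] (x : M) :
    x + x = 0 := by
  have h : (2 : ZMod 2) • x = 0 := by
    have : (2 : ZMod 2) = 0 := by decide
    rw [this, zero_smul]
  rwa [two_smul] at h

/-- Reidemeister move R2: given the Bar-Natan relations as hypotheses, the maps
F¹ = (cup∘d_{∥=}, id), G¹ = (d_{=∥}∘cap, id), H¹ = (cap, 0), H² = (cup, 0) exhibit
the two-step R2 complex A^{⊗s} → A^{⊗(s+1)} ⊕ A^{⊗r} → A^{⊗s} (over 𝔽₂, the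
middle spaces `S1 × R`) as strongly deformation retracting onto the one-term
complex A^{⊗r} in degree 1. Here S, S1, R stand for the tensor powers A^{⊗s},
A^{⊗(s+1)}, A^{⊗r}. -/
theorem R2_strong_deformation_retraction
    {S S1 R : Type*} [AddCommGroup S] [Module (ZMod 2) S]
    [AddCommGroup S1] [Module (ZMod 2) S1] [AddCommGroup R] [Module (ZMod 2) R]
    (cup : S →ₗ[ZMod 2] S1) (cap : S1 →ₗ[ZMod 2] S)
    (dA : S →ₗ[ZMod 2] S1) (dB : S1 →ₗ[ZMod 2] S)
    (dEq : S →ₗ[ZMod 2] R) (dPar : R →ₗ[ZMod 2] S)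
    (hiso : dB ∘ₗ dA = dPar ∘ₗ dEq)
    (hcapA : cap ∘ₗ dA = LinearMap.id)
    (hBcup : dB ∘ₗ cup = LinearMap.id)
    (hsphere : cap ∘ₗ cup = 0)
    (h4tube : dA ∘ₗ cap + cup ∘ₗ dPar ∘ₗ dEq ∘ₗ cap + cup ∘ₗ dB = LinearMap.id) :
    let d0 : S →ₗ[ZMod 2] S1 × R := LinearMap.prod dA dEq
    let d1 : S1 × R →ₗ[ZMod 2] S :=
      dB ∘ₗ LinearMap.fst (ZMod 2) S1 R + dPar ∘ₗ LinearMap.snd (ZMod 2) S1 R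
    let F1 : R →ₗ[ZMod 2] S1 × R := LinearMap.prod (cup ∘ₗ dPar) LinearMap.id
    let G1 : S1 × R →ₗ[ZMod 2] R :=
      dEq ∘ₗ cap ∘ₗ LinearMap.fst (ZMod 2) S1 R + LinearMap.snd (ZMod 2) S1 R
    let H1 : S1 × R →ₗ[ZMod 2] S := cap ∘ₗ LinearMap.fst (ZMod 2) S1 R
    let H2 : S →ₗ[ZMod 2] S1 × R := LinearMap.prod cup 0
    (d1 ∘ₗ F1 = 0) ∧ (G1 ∘ₗ d0 = 0) ∧ (G1 ∘ₗ F1 = LinearMap.id) ∧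
      (H1 ∘ₗ d0 = LinearMap.id) ∧ (d1 ∘ₗ H2 = LinearMap.id) ∧
      (d0 ∘ₗ H1 + F1 ∘ₗ G1 + H2 ∘ₗ d1 = LinearMap.id) ∧
      (H1 ∘ₗ F1 = 0) := by
  intro d0 d1 F1 G1 H1 H2
  have hiso' := fun x => congrFun (congrArg DFunLike.coe hiso) x
  have hcapA' := fun x => congrFun (congrArg DFunLike.coe hcapA) x
  have hBcup' := fun x => congrFun (congrArg DFunLike.coe hBcup) x
  have hsphere' := fun x => congrFun (congrArg DFunLike.coe hsphere) x
  have h4tube' := fun x => congrFun (congrArg DFunLike.coe h4tube) x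
  simp only [LinearMap.comp_apply, LinearMap.add_apply, LinearMap.id_apply,
    LinearMap.zero_apply] at hiso' hcapA' hBcup' hsphere' h4tube'
  refine ⟨?_, ?_, ?_, ?_, ?_, ?_, ?_⟩
  · ext x
    simp only [d1, F1, LinearMap.comp_apply, LinearMap.add_apply, LinearMap.zero_apply,
      LinearMap.prod_apply, Function.prod, LinearMap.fst_apply, LinearMap.snd_apply,
      LinearMap.id_apply]
    rw [hBcup', zmod2_self_add]
  · ext x
    simp only [d0, G1, LinearMap.comp_apply, LinearMap.add_apply, LinearMap.zero_apply,
      LinearMap.prod_apply, Function.prod, LinearMap.fst_apply, LinearMap.snd_apply]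
    rw [hcapA', zmod2_self_add]
  · ext x
    simp only [F1, G1, LinearMap.comp_apply, LinearMap.add_apply, LinearMap.id_apply,
      LinearMap.prod_apply, Function.prod, LinearMap.fst_apply, LinearMap.snd_apply]
    rw [hsphere']
    simp
  · ext x
    simp only [d0, H1, LinearMap.comp_apply, LinearMap.prod_apply, Function.prod,
      LinearMap.fst_apply, LinearMap.id_apply]
    exact hcapA' x
  · ext x
    simp only [d1, H2, LinearMap.comp_apply, LinearMap.add_apply, LinearMap.prod_apply,
      Function.prod, LinearMap.fst_apply, LinearMap.snd_apply, LinearMap.id_apply,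
      LinearMap.zero_apply, map_zero, add_zero]
    exact hBcup' x
  · refine LinearMap.ext fun p => ?_
    obtain ⟨x, y⟩ := p
    simp only [d0, d1, F1, G1, H1, H2, LinearMap.comp_apply, LinearMap.add_apply,
      LinearMap.prod_apply, Function.prod, LinearMap.fst_apply, LinearMap.snd_apply,
      LinearMap.id_apply, LinearMap.zero_apply, map_add, Prod.mk_add_mk, LinearMap.id_apply]
    refine Prod.ext ?_ ?_
    · simp only [Prod.fst_add]
      have h4 := h4tube' x
      have hy : cup (dPar y) + cup (dPar y) = 0 := zmod2_self_add _
      calc dA (cap x) + (cup (dPar (dEq (cap x))) + cup (dPar y)) + (cup (dB x) + cup (dPar y))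
          = (dA (cap x) + cup (dPar (dEq (cap x))) + cup (dB x)) + (cup (dPar y) + cup (dPar y)) := by abel
        _ = x := by rw [hy, add_zero, h4]
    · show dEq (cap x) + (dEq (cap x) + y) + (0 + 0) = y
      rw [add_zero, add_zero, ← add_assoc, zmod2_self_add, zero_add]
  · ext x
    simp only [F1, H1, LinearMap.comp_apply, LinearMap.prod_apply, Function.prod,
      LinearMap.fst_apply, LinearMap.id_apply, LinearMap.zero_apply]
    exact hsphere' (dPar x)
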